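/- Let G be a finite group and P a Sylow p-subgroup of G. Then P ∩ G' is generated by the set of commutators [x,y] with x ∈ P, y ∈ G, and [x,y] ∈ P. -/

import Mathlib

open Subgroup Function MulAction
open scoped commutatorElement

/-- A variant of `MonoidHom.transfer_eq_pow`: if `g ∈ H` and `ϕ` sends every conjugate of
a power of `g` lying in `H` to the corresponding power of `ϕ g`, then
`transfer ϕ g = ϕ g ^ H.index`. -/
theorem transfer_eq_pow_of_mem {G : Type*} [Group G] {H : Subgroup G} {A : Type*} [CommGroup A]
    (ϕ : H →* A) [H.FiniteIndex] (g : G) (hg : g ∈ H)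
    (key : ∀ (k : ℕ) (g₀ : G) (h : g₀⁻¹ * g ^ k * g₀ ∈ H),
      ϕ ⟨g₀⁻¹ * g ^ k * g₀, h⟩ = ϕ ⟨g, hg⟩ ^ k) :
    MonoidHom.transfer ϕ g = ϕ ⟨g, hg⟩ ^ H.index := by
  classical
  letI := H.fintypeQuotientOfFiniteIndex
  rw [MonoidHom.transfer_eq_prod_quotient_orbitRel_zpowers_quot,
    Finset.prod_congr rfl (fun q _ => key _ _ _), Finset.prod_pow_eq_pow_sum]
  congr 1
  simp only [minimalPeriod_eq_card]
  rw [index_eq_card, Nat.card_eq_fintype_card,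
    Fintype.card_congr (selfEquivSigmaOrbits (zpowers g) (G ⧸ H)), Fintype.card_sigma]
  rfl

/-- Focal subgroup theorem: for a Sylow `p`-subgroup `P` of a finite group `G`,
`P ∩ G'` is generated by the commutators `[x,y]` with `x ∈ P`, `y ∈ G`, `[x,y] ∈ P`. -/
theorem focal_subgroup (G : Type*) [Group G] [Finite G] (p : ℕ) [Fact p.Prime]
    (P : Sylow p G) :
    (P : Subgroup G) ⊓ commutator G =
      Subgroup.closure {z : G | ∃ x y : G, z = x⁻¹ * y⁻¹ * x * y ∧
        x ∈ (P : Subgroup G) ∧ z ∈ (P : Subgroup G)} := by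
  classical
  set S : Set G := {z : G | ∃ x y : G, z = x⁻¹ * y⁻¹ * x * y ∧
    x ∈ (P : Subgroup G) ∧ z ∈ (P : Subgroup G)} with hS
  set F : Subgroup G := Subgroup.closure S with hF
  have hFP : F ≤ (P : Subgroup G) := by
    rw [hF, Subgroup.closure_le]
    rintro z ⟨x, y, rfl, hx, hz⟩
    exact hz
  have hFcomm : F ≤ commutator G := by
    rw [hF, Subgroup.closure_le]
    rintro z ⟨x, y, rfl, hx, hz⟩
    have : x⁻¹ * y⁻¹ * x * y = ⁅x⁻¹, y⁻¹⁆ := by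
      simp [commutatorElement_def, mul_assoc]
    rw [this]
    exact Subgroup.commutator_mem_commutator (Subgroup.mem_top _) (Subgroup.mem_top _)
  refine le_antisymm ?_ (le_inf hFP hFcomm)
  -- the hard direction, via the transfer homomorphism into `P ⧸ T`
  set T : Subgroup (P : Subgroup G) := F.subgroupOf (P : Subgroup G) with hT
  have hTmem : ∀ (x : (P : Subgroup G)) (y : G), ((x : G)⁻¹ * y⁻¹ * x * y ∈ (P : Subgroup G)) →
      (x : G)⁻¹ * y⁻¹ * x * y ∈ F := fun x y h =>
    Subgroup.subset_closure ⟨x, y, rfl, x.2, h⟩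
  have hTnormal : T.Normal := by
    constructor
    intro n hn g
    rw [hT, Subgroup.mem_subgroupOf] at hn ⊢
    have hc : ((n : G)⁻¹ * (g : G)⁻¹⁻¹ * n * (g : G)⁻¹ ∈ (P : Subgroup G)) := by
      exact Subgroup.mul_mem _ (Subgroup.mul_mem _ (Subgroup.mul_mem _
        (Subgroup.inv_mem _ n.2) (Subgroup.inv_mem _ (Subgroup.inv_mem _ g.2))) n.2)
        (Subgroup.inv_mem _ g.2)
    have := hTmem n (g : G)⁻¹ hc
    have hgn : ((g * n * g⁻¹ : (P : Subgroup G)) : G) =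
        (n : G) * ((n : G)⁻¹ * (g : G)⁻¹⁻¹ * n * (g : G)⁻¹) := by
      push_cast
      group
    rw [hgn]
    exact F.mul_mem hn this
  haveI := hTnormal
  haveI : Std.Commutative (α := (P : Subgroup G) ⧸ T) (· * ·) := by
    constructor
    intro a b
    induction a using QuotientGroup.induction_on with
    | H a =>
    induction b using QuotientGroup.induction_on with
    | H b =>
    rw [← QuotientGroup.mk_mul, ← QuotientGroup.mk_mul, QuotientGroup.eq]
    rw [hT, Subgroup.mem_subgroupOf]
    have : (((a * b)⁻¹ * (b * a) : (P : Subgroup G)) : G) =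
        (b : G)⁻¹ * (a : G)⁻¹ * b * a := by push_cast; group
    rw [this]
    exact hTmem b (a : G) (Subgroup.mul_mem _ (Subgroup.mul_mem _ (Subgroup.mul_mem _
      (Subgroup.inv_mem _ b.2) (Subgroup.inv_mem _ a.2)) b.2) a.2)
  letI : CommGroup ((P : Subgroup G) ⧸ T) :=
    { (inferInstance : Group ((P : Subgroup G) ⧸ T)) with
      mul_comm := fun a b => Std.Commutative.comm a b }
  set ϕ : (P : Subgroup G) →* (P : Subgroup G) ⧸ T := QuotientGroup.mk' T with hϕ
  rintro g ⟨hgP, hgC⟩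
  -- compute the transfer of g
  have key : ∀ (k : ℕ) (g₀ : G) (h : g₀⁻¹ * g ^ k * g₀ ∈ (P : Subgroup G)),
      ϕ ⟨g₀⁻¹ * g ^ k * g₀, h⟩ = ϕ ⟨g, hgP⟩ ^ k := by
    intro k g₀ h
    have hgk : g ^ k ∈ (P : Subgroup G) := Subgroup.pow_mem _ hgP k
    have h2 : ((⟨g, hgP⟩ : (P : Subgroup G)) ^ k : (P : Subgroup G)) = ⟨g ^ k, hgk⟩ := by
      ext; push_cast; rfl
    rw [← map_pow, h2, hϕ, QuotientGroup.mk'_eq_mk']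
    have hzP : g₀⁻¹ * (g ^ k)⁻¹ * g₀ * g ^ k ∈ (P : Subgroup G) := by
      have he : g₀⁻¹ * (g ^ k)⁻¹ * g₀ * g ^ k = (g₀⁻¹ * g ^ k * g₀)⁻¹ * g ^ k := by group
      rw [he]
      exact Subgroup.mul_mem _ (Subgroup.inv_mem _ h) hgk
    have hz : ((⟨g₀⁻¹ * g ^ k * g₀, h⟩ : (P : Subgroup G)) : G)⁻¹ * (g₀⁻¹)⁻¹ *
        (g₀⁻¹ * g ^ k * g₀) * g₀⁻¹ = g₀⁻¹ * (g ^ k)⁻¹ * g₀ * g ^ k := by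
      simp only [Subgroup.coe_mk]
      group
    have hzF : g₀⁻¹ * (g ^ k)⁻¹ * g₀ * g ^ k ∈ F := by
      have h' := hTmem ⟨g₀⁻¹ * g ^ k * g₀, h⟩ g₀⁻¹ (by rw [hz]; exact hzP)
      rwa [hz] at h'
    refine ⟨⟨g₀⁻¹ * (g ^ k)⁻¹ * g₀ * g ^ k, hzP⟩, ?_, ?_⟩
    · rw [hT, Subgroup.mem_subgroupOf]
      exact hzF
    · ext
      push_cast
      group
  have htrans := transfer_eq_pow_of_mem ϕ g hgP key
  have hker : MonoidHom.transfer ϕ g = 1 := by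
    have := Abelianization.commutator_subset_ker (MonoidHom.transfer ϕ) hgC
    rwa [MonoidHom.mem_ker] at this
  rw [hker] at htrans
  -- ϕ ⟨g, hgP⟩ has p-power order, and its order divides index which is coprime to p
  have hpq : IsPGroup p ((P : Subgroup G) ⧸ T) := P.2.to_quotient T
  obtain ⟨k, hk⟩ := (IsPGroup.iff_orderOf.mp hpq) (ϕ ⟨g, hgP⟩)
  have hdvd : orderOf (ϕ ⟨g, hgP⟩) ∣ (P : Subgroup G).index := orderOf_dvd_of_pow_eq_one htrans.symm
  have hnd : ¬ p ∣ (P : Subgroup G).index := P.not_dvd_index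
  have hcop : Nat.Coprime (p ^ k) (P : Subgroup G).index :=
    Nat.Coprime.pow_left _ ((Nat.Prime.coprime_iff_not_dvd Fact.out).mpr hnd)
  rw [hk] at hdvd
  have : p ^ k = 1 := Nat.eq_one_of_dvd_coprimes hcop dvd_rfl hdvd
  have horder : orderOf (ϕ ⟨g, hgP⟩) = 1 := by rw [hk, this]
  have h1 : ϕ ⟨g, hgP⟩ = 1 := orderOf_eq_one_iff.mp horder
  rw [hϕ] at h1
  have := (QuotientGroup.eq_one_iff _).mp h1
  rwa [hT, Subgroup.mem_subgroupOf] at this
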